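/- Let G be a finite group with no element of order pq for a prime q ≠ p, let S be a Sylow p-subgroup of G, N = N_G(S) its normalizer, and W = N/S the Weyl group. Then the conjugation action of W on S is free: if x ∈ N satisfies x s x⁻¹ = s for some nontrivial s ∈ S, then x ∈ S. -/

import Mathlib

theorem stmt7 (p : ℕ) [Fact p.Prime] (G : Type*) [Group G] [Finite G]
    (hiso : ∀ g : G, ∀ q : ℕ, q.Prime → q ≠ p → orderOf g ≠ p * q)
    (S : Sylow p G) :
    ∀ x ∈ Subgroup.normalizer ((S : Subgroup G) : Set G), ∀ s ∈ (S : Subgroup G), s ≠ 1 →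
      x * s * x⁻¹ = s → x ∈ (S : Subgroup G) := by
  intro x hx s hs hs1 hconj
  have hp : p.Prime := Fact.out
  have hc : Commute x s := by
    have : x * s = s * x := by
      conv_rhs => rw [← hconj]
      group
    exact this
  -- orderOf s = p ^ e with e ≥ 1
  obtain ⟨k0, hk0⟩ := S.2 ⟨s, hs⟩
  have hsk : s ^ p ^ k0 = 1 := by
    have := congrArg (Subgroup.subtype (S : Subgroup G)) hk0
    simpa using this
  obtain ⟨e, he, hee⟩ := (Nat.dvd_prime_pow hp).mp (orderOf_dvd_of_pow_eq_one hsk)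
  have he1 : e ≠ 0 := by
    rintro rfl
    exact hs1 (orderOf_eq_one_iff.mp (by simpa using hee))
  -- s' of order p
  set s' := s ^ p ^ (e - 1) with hs'
  have hords' : orderOf s' = p := by
    rw [hs', orderOf_pow, hee, Nat.gcd_eq_right (pow_dvd_pow p (Nat.sub_le e 1)),
      Nat.pow_div (Nat.sub_le e 1) hp.pos]
    rw [show e - (e - 1) = 1 by omega, pow_one]
  -- orderOf x = p ^ k * m
  set n := orderOf x with hn
  have hn0 : n ≠ 0 := (orderOf_pos x).ne'
  set m := n / p ^ (n.factorization p) with hm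
  have hdvd : p ^ (n.factorization p) ∣ n := Nat.ordProj_dvd n p
  have hy : orderOf (x ^ p ^ (n.factorization p)) = m := by
    rw [orderOf_pow, ← hn, Nat.gcd_eq_right hdvd, hm]
  by_cases hm1 : m = 1
  · -- x is a p-element, hence in S
    have hnp : n = p ^ (n.factorization p) := by
      have := Nat.eq_mul_of_div_eq_right hdvd (hm ▸ hm1)
      simpa using this
    have hPx : IsPGroup p (Subgroup.zpowers x) :=
      IsPGroup.of_card (by rw [Nat.card_zpowers, ← hn, hnp])
    have := hPx.inf_normalizer_sylow S
    have hx' : x ∈ Subgroup.zpowers x ⊓ Subgroup.normalizer (S : Set G) :=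
      ⟨Subgroup.mem_zpowers x, hx⟩
    rw [this] at hx'
    exact hx'.2
  · -- contradiction with hiso
    exfalso
    have hm0 : m ≠ 0 := by
      rw [hm]; exact Nat.div_ne_zero_iff.mpr ⟨pow_ne_zero _ hp.ne_zero, Nat.le_of_dvd (Nat.pos_of_ne_zero hn0) hdvd⟩
    obtain ⟨q, hqp, hqdvd⟩ := Nat.exists_prime_and_dvd hm1
    have hqne : q ≠ p := by
      rintro rfl
      exact Nat.not_dvd_ordCompl hp hn0 (hqdvd)
    set v := (x ^ p ^ (n.factorization p)) ^ (m / q) with hv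
    have hordv : orderOf v = q := by
      rw [hv, orderOf_pow, hy, Nat.gcd_eq_right (Nat.div_dvd_of_dvd hqdvd),
        Nat.div_div_self hqdvd hm0]
    have hcv : Commute s' v := ((hc.symm.pow_pow _ _).pow_right _)
    have : orderOf (s' * v) = p * q := by
      rw [hcv.orderOf_mul_eq_mul_orderOf_of_coprime (by
        rw [hords', hordv]; exact (Nat.coprime_primes hp hqp).mpr (Ne.symm hqne)), hords', hordv]
    exact hiso (s' * v) q hqp hqne this
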